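/- Let a₀, a₁, a₂, a₁₁, a₁₂, a₂₂ : [0, T] → ℝ be differentiable and define the quadratic ansatz V(t, m, v) := a₀(t) + a₁(t)·m + a₂(t)·v + a₁₁(t)·m² + a₁₂(t)·m·v + a₂₂(t)·v². Then the Hamilton–Jacobi–Bellman–Isaacs identity ∂_t V(t, m, v) = H*(m, v, ∂_m V(t, m, v), ∂_v V(t, m, v)) holds for all t ∈ [0, T] and all (m, v) ∈ ℝ² if and only if the six coefficient functions satisfy, for all t ∈ [0, T], the coupled Riccati ODE system: ȧ₀ = Σ²a₂ + (λ_m − η²/(4R_u))a₁² + (λ_v − χ²/(4R))a₂²; ȧ₁ = Σ²a₁₂ + (4λ_m − η²/R_u)a₁a₁₁ + (2λ_v − χ²/(2R))a₂a₁₂; ȧ₂ = w̄₂ − 2βa₂ + 2Σ²a₂₂ + (2λ_m − η²/(2R_u))a₁a₁₂ + (4λ_v − χ²/R)a₂a₂₂ − (ηκ/(2R_u))a₁; ȧ₁₁ = w₁ + (4λ_m − η²/R_u)a₁₁² + (λ_v − χ²/(4R))a₁₂²; ȧ₁₂ = −2βa₁₂ − (ηκ/R_u)a₁₁ + (4λ_m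 − η²/R_u)a₁₁a₁₂ + (4λ_v − χ²/R)a₁₂a₂₂; ȧ₂₂ = −4βa₂₂ − κ²/(4R_u) − (ηκ/(2R_u))a₁₂ + (λ_m − η²/(4R_u))a₁₂² + (4λ_v − χ²/R)a₂₂². -/

import Mathlib

/-- The optimized Hamiltonian
`H*(m, v, pm, pv) = λm·pm² + λv·pv² + w₁·m² + w̄₂·v + pv·(−2βv + Σ²)
  − (η·pm + κ·v)²/(4Ru) − χ²·pv²/(4R)`. -/
noncomputable def Hstar (β η χ w₁ w₂bar κ Ru R lm lv Sig2 m v pm pv : ℝ) : ℝ :=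
  lm * pm ^ 2 + lv * pv ^ 2 + w₁ * m ^ 2 + w₂bar * v + pv * (-2 * β * v + Sig2)
    - (η * pm + κ * v) ^ 2 / (4 * Ru) - χ ^ 2 * pv ^ 2 / (4 * R)

/-- Let `a₀, a₁, a₂, a₁₁, a₁₂, a₂₂` be differentiable and define the
quadratic ansatz `V(t, m, v) = a₀(t) + a₁(t)m + a₂(t)v + a₁₁(t)m² + a₁₂(t)mv + a₂₂(t)v²`.
Then the HJBI identity `∂ₜV(t,m,v) = H*(m, v, ∂ₘV, ∂ᵥV)` holds for all `t ∈ [0, T]` and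
all `(m, v) ∈ ℝ²` iff the six coefficients satisfy the coupled Riccati ODE system on
`[0, T]`. -/
theorem hjbi_quadratic_ansatz_iff_riccati
    (β η χ w₁ w₂bar κ Ru R lm lv σL σc T : ℝ)
    (hβ : 0 < β) (hη : 0 < η) (hχ : 0 < χ) (hw₁ : 0 < w₁) (hw₂ : 0 < w₂bar)
    (hκ : 0 < κ) (hRu : 0 < Ru) (hR : 0 < R) (hlm : 0 < lm) (hlv : 0 < lv) (hT : 0 < T)
    (a0 a1 a2 a11 a12 a22 : ℝ → ℝ)
    (hd0 : Differentiable ℝ a0) (hd1 : Differentiable ℝ a1) (hd2 : Differentiable ℝ a2)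
    (hd11 : Differentiable ℝ a11) (hd12 : Differentiable ℝ a12)
    (hd22 : Differentiable ℝ a22) :
    (∀ t ∈ Set.Icc (0 : ℝ) T, ∀ m v : ℝ,
      deriv (fun s => a0 s + a1 s * m + a2 s * v + a11 s * m ^ 2 + a12 s * (m * v)
          + a22 s * v ^ 2) t
        = Hstar β η χ w₁ w₂bar κ Ru R lm lv (σL ^ 2 + σc ^ 2) m v
            (a1 t + 2 * a11 t * m + a12 t * v) (a2 t + a12 t * m + 2 * a22 t * v))
    ↔ (∀ t ∈ Set.Icc (0 : ℝ) T,
      deriv a0 t = (σL ^ 2 + σc ^ 2) * a2 t + (lm - η ^ 2 / (4 * Ru)) * a1 t ^ 2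
          + (lv - χ ^ 2 / (4 * R)) * a2 t ^ 2 ∧
      deriv a1 t = (σL ^ 2 + σc ^ 2) * a12 t + (4 * lm - η ^ 2 / Ru) * a1 t * a11 t
          + (2 * lv - χ ^ 2 / (2 * R)) * a2 t * a12 t ∧
      deriv a2 t = w₂bar - 2 * β * a2 t + 2 * (σL ^ 2 + σc ^ 2) * a22 t
          + (2 * lm - η ^ 2 / (2 * Ru)) * a1 t * a12 t
          + (4 * lv - χ ^ 2 / R) * a2 t * a22 t - η * κ / (2 * Ru) * a1 t ∧
      deriv a11 t = w₁ + (4 * lm - η ^ 2 / Ru) * a11 t ^ 2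
          + (lv - χ ^ 2 / (4 * R)) * a12 t ^ 2 ∧
      deriv a12 t = -2 * β * a12 t - η * κ / Ru * a11 t
          + (4 * lm - η ^ 2 / Ru) * a11 t * a12 t
          + (4 * lv - χ ^ 2 / R) * a12 t * a22 t ∧
      deriv a22 t = -4 * β * a22 t - κ ^ 2 / (4 * Ru) - η * κ / (2 * Ru) * a12 t
          + (lm - η ^ 2 / (4 * Ru)) * a12 t ^ 2
          + (4 * lv - χ ^ 2 / R) * a22 t ^ 2) := by
  have hRu' : Ru ≠ 0 := ne_of_gt hRu
  have hR' : R ≠ 0 := ne_of_gt hR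
  have key : ∀ t m v : ℝ,
      deriv (fun s => a0 s + a1 s * m + a2 s * v + a11 s * m ^ 2 + a12 s * (m * v)
          + a22 s * v ^ 2) t
        = deriv a0 t + deriv a1 t * m + deriv a2 t * v + deriv a11 t * m ^ 2
          + deriv a12 t * (m * v) + deriv a22 t * v ^ 2 := by
    intro t m v
    have h := ((((((hd0 t).hasDerivAt.add ((hd1 t).hasDerivAt.mul_const m)).add
      ((hd2 t).hasDerivAt.mul_const v)).add ((hd11 t).hasDerivAt.mul_const (m ^ 2))).add
      ((hd12 t).hasDerivAt.mul_const (m * v))).add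
      ((hd22 t).hasDerivAt.mul_const (v ^ 2))).deriv
    exact h
  constructor
  · intro h t ht
    have H : ∀ m v : ℝ,
        deriv a0 t + deriv a1 t * m + deriv a2 t * v + deriv a11 t * m ^ 2
          + deriv a12 t * (m * v) + deriv a22 t * v ^ 2
        = Hstar β η χ w₁ w₂bar κ Ru R lm lv (σL ^ 2 + σc ^ 2) m v
            (a1 t + 2 * a11 t * m + a12 t * v) (a2 t + a12 t * m + 2 * a22 t * v) := by
      intro m v; rw [← key t m v]; exact h t ht m v
    simp only [Hstar] at H
    have h00 := H 0 0
    have h10 := H 1 0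
    have hm0 := H (-1) 0
    have h01 := H 0 1
    have h0m := H 0 (-1)
    have h11 := H 1 1
    refine ⟨?_, ?_, ?_, ?_, ?_, ?_⟩
    · linear_combination h00
    · linear_combination (h10 - hm0) / 2
    · linear_combination (h01 - h0m) / 2
    · linear_combination (h10 + hm0) / 2 - h00
    · linear_combination h11 - h10 - h01 + h00
    · linear_combination (h01 + h0m) / 2 - h00
  · intro h t ht m v
    obtain ⟨e0, e1, e2, e11, e12, e22⟩ := h t ht
    rw [key t m v, e0, e1, e2, e11, e12, e22]
    simp only [Hstar]
    ring
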